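/- With P and Q as in the L2-ALSH scheme and ‖q‖ = 1, ‖x_i‖ ≤ U < 1 for all i: for any x, y with ⟨q,x⟩ - ⟨q,y⟩ > U^{2^{m+1}}/2, we have ‖Q(q) - P(x)‖ < ‖Q(q) - P(y)‖. -/

import Mathlib

open Real RealInnerProductSpace

/-- L2-ALSH preprocessing transformation. -/
noncomputable def l2ALSH_P (m D : ℕ) (x : EuclideanSpace ℝ (Fin D)) :
    EuclideanSpace ℝ (Fin (D + m)) :=
  WithLp.toLp 2 fun j => if h : (j : ℕ) < D then x ⟨j, h⟩ else ‖x‖ ^ (2 ^ ((j : ℕ) - D + 1))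

/-- L2-ALSH query transformation. -/
noncomputable def l2ALSH_Q (m D : ℕ) (q : EuclideanSpace ℝ (Fin D)) :
    EuclideanSpace ℝ (Fin (D + m)) :=
  WithLp.toLp 2 fun j => if h : (j : ℕ) < D then q ⟨j, h⟩ else 1 / 2

lemma key (m D : ℕ) (q v : EuclideanSpace ℝ (Fin D)) (hq : ‖q‖ = 1) :
    ‖l2ALSH_Q m D q - l2ALSH_P m D v‖ ^ 2
      = 1 + m / 4 - 2 * ⟪q, v⟫ + ‖v‖ ^ 2 ^ (m + 1) := by
  have h1 : ‖l2ALSH_Q m D q - l2ALSH_P m D v‖ ^ 2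
      = ∑ j : Fin (D + m), (l2ALSH_Q m D q j - l2ALSH_P m D v j) ^ 2 := by
    rw [EuclideanSpace.norm_sq_eq]
    simp [Real.norm_eq_abs, sq_abs]
  rw [h1, Fin.sum_univ_add]
  have hfirst : ∑ i : Fin D,
      (l2ALSH_Q m D q (Fin.castAdd m i) - l2ALSH_P m D v (Fin.castAdd m i)) ^ 2
      = 1 - 2 * ⟪q, v⟫ + ‖v‖ ^ 2 := by
    have : ∀ i : Fin D,
        (l2ALSH_Q m D q (Fin.castAdd m i) - l2ALSH_P m D v (Fin.castAdd m i)) ^ 2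
        = q i ^ 2 - 2 * (q i * v i) + v i ^ 2 := by
      intro i
      simp [l2ALSH_Q, l2ALSH_P, i.isLt, sub_sq]
      ring
    rw [Finset.sum_congr rfl fun i _ => this i]
    have hqq : ∑ i : Fin D, q i ^ 2 = 1 := by
      have := EuclideanSpace.norm_sq_eq q
      simp [hq, Real.norm_eq_abs, sq_abs] at this
      linarith [this]
    have hvv : ∑ i : Fin D, v i ^ 2 = ‖v‖ ^ 2 := by
      have := EuclideanSpace.norm_sq_eq v
      simp [Real.norm_eq_abs, sq_abs] at this
      linarith [this]
    have hqv : ∑ i : Fin D, q i * v i = ⟪q, v⟫ := by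
      simp [PiLp.inner_apply, mul_comm]
    rw [Finset.sum_add_distrib, Finset.sum_sub_distrib, ← Finset.mul_sum, hqq, hvv, hqv]
  have hsecond : ∑ k : Fin m,
      (l2ALSH_Q m D q (Fin.natAdd D k) - l2ALSH_P m D v (Fin.natAdd D k)) ^ 2
      = m / 4 - ‖v‖ ^ 2 + ‖v‖ ^ 2 ^ (m + 1) := by
    have hterm : ∀ k : Fin m,
        (l2ALSH_Q m D q (Fin.natAdd D k) - l2ALSH_P m D v (Fin.natAdd D k)) ^ 2
        = 1/4 - ‖v‖ ^ 2 ^ ((k:ℕ) + 1) + ‖v‖ ^ 2 ^ ((k:ℕ) + 2) := by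
      intro k
      have h2 : ¬ (D + (k:ℕ) < D) := by omega
      simp [l2ALSH_Q, l2ALSH_P, h2, sub_sq, ← pow_mul]
      ring_nf
    rw [Finset.sum_congr rfl fun k _ => hterm k,
      Fin.sum_univ_eq_sum_range (fun n => 1/4 - ‖v‖ ^ 2 ^ (n + 1) + ‖v‖ ^ 2 ^ (n + 2))]
    have htel : ∑ k ∈ Finset.range m, (‖v‖ ^ 2 ^ (k + 2) - ‖v‖ ^ 2 ^ (k + 1))
        = ‖v‖ ^ 2 ^ (m + 1) - ‖v‖ ^ 2 ^ 1 := by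
      exact Finset.sum_range_sub (fun k => ‖v‖ ^ 2 ^ (k + 1)) m
    have : ∑ k ∈ Finset.range m,
        (1/4 - ‖v‖ ^ 2 ^ (k + 1) + ‖v‖ ^ 2 ^ (k + 2))
        = ∑ k ∈ Finset.range m, (1/4 : ℝ)
          + ∑ k ∈ Finset.range m, (‖v‖ ^ 2 ^ (k + 2) - ‖v‖ ^ 2 ^ (k + 1)) := by
      rw [← Finset.sum_add_distrib]; congr 1; ext k; ring
    rw [this, htel]
    simp
    ring
  rw [hfirst, hsecond]; ring

/-- With `‖q‖ = 1` and `‖x‖, ‖y‖ ≤ U < 1`: if `⟨q,x⟩ - ⟨q,y⟩ > U^(2^(m+1))/2`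
then `‖Q(q) - P(x)‖ < ‖Q(q) - P(y)‖`. -/
theorem l2ALSH_ordering (m D : ℕ) (hm : 1 ≤ m) (U : ℝ)
    (q x y : EuclideanSpace ℝ (Fin D)) (hq : ‖q‖ = 1)
    (hx : ‖x‖ ≤ U) (hy : ‖y‖ ≤ U) (hU : U < 1)
    (hgap : ⟪q, x⟫ - ⟪q, y⟫ > U ^ (2 ^ (m + 1)) / 2) :
    ‖l2ALSH_Q m D q - l2ALSH_P m D x‖ < ‖l2ALSH_Q m D q - l2ALSH_P m D y‖ := by
  have hkx := key m D q x hq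
  have hky := key m D q y hq
  have hxp : ‖x‖ ^ 2 ^ (m + 1) ≤ U ^ 2 ^ (m + 1) :=
    pow_le_pow_left₀ (norm_nonneg x) hx _
  have hyp : (0:ℝ) ≤ ‖y‖ ^ 2 ^ (m + 1) := pow_nonneg (norm_nonneg y) _
  have hlt : ‖l2ALSH_Q m D q - l2ALSH_P m D x‖ ^ 2
      < ‖l2ALSH_Q m D q - l2ALSH_P m D y‖ ^ 2 := by
    rw [hkx, hky]; linarith
  exact lt_of_pow_lt_pow_left₀ 2 (norm_nonneg _) hlt
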